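/- Let X be a Peano continuum (locally connected continuum), and let A be a nonsingleton equivalence class of the cut-point equivalence relation on X (two non-cut points are equivalent if no cut point separates them). Then the closure of A is a Peano continuum without cut points. -/

import Mathlib

open Set

section Defs

variable {X : Type*} [TopologicalSpace X]

/-- `U` is relatively open in the subspace `X - C`. -/
def RelOpen (C U : Set X) : Prop := ∃ O : Set X, IsOpen O ∧ U = O ∩ Cᶜ

/-- `U, V` form a disconnection of `X - C` into two nonempty relatively open sets. -/
def SepPair (C U V : Set X) : Prop :=
  RelOpen C U ∧ RelOpen C V ∧ Disjoint U V ∧ U ∪ V = Cᶜ ∧ U.Nonempty ∧ V.Nonempty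

/-- `C` separates `A` from `B`. -/
def Separates (C A B : Set X) : Prop := ∃ U V : Set X, SepPair C U V ∧ A ⊆ U ∧ B ⊆ V

/-- `C` separates `X`, i.e. `X - C` is disconnected. -/
def Cuts (C : Set X) : Prop := ∃ U V : Set X, SepPair C U V

def CutPoint (c : X) : Prop := Cuts ({c} : Set X)

def CutPair (c d : X) : Prop := c ≠ d ∧ ¬CutPoint c ∧ ¬CutPoint d ∧ Cuts ({c, d} : Set X)

def IsSubcontinuum (Y : Set X) : Prop := IsCompact Y ∧ IsConnected Y

/-- A nondegenerate set no two of whose points are separated by a cut pair. -/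
def InsepSet (A : Set X) : Prop :=
  A.Nontrivial ∧ ∀ c d : X, CutPair c d → ∀ a ∈ A, ∀ b ∈ A,
    ¬Separates ({c, d} : Set X) {a} {b}

def MaxInsep (A : Set X) : Prop := InsepSet A ∧ ∀ B : Set X, InsepSet B → A ⊆ B → B = A

def InsepCutPair (a b : X) : Prop := CutPair a b ∧ InsepSet ({a, b} : Set X)

/-- A cyclic decomposition of `X` by the points `x 0, …, x (n-1)` (cyclically indexed),
into subcontinua `M i`, consecutive ones meeting in a single point. -/
def CyclicDecomp (n : ℕ) (x : ZMod n → X) (M : ZMod n → Set X) : Prop :=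
  2 < n ∧ Function.Injective x ∧
  (∀ i, IsSubcontinuum (M i)) ∧
  (∀ i, M i ∩ M (i + 1) = {x (i + 1)}) ∧
  (∀ i j, i ≠ j → j ≠ i + 1 → i ≠ j + 1 → M i ∩ M j = ∅) ∧
  (⋃ i, M i) = univ

/-- A finite set is cyclic if it is a cut pair, or admits a cyclic decomposition. -/
def CyclicFinset (S : Set X) : Prop :=
  (∃ a b : X, CutPair a b ∧ S = {a, b}) ∨
  (∃ n : ℕ, ∃ (x : ZMod n → X) (M : ZMod n → Set X), CyclicDecomp n x M ∧ S = Set.range x)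

/-- A set (with more than one point) is cyclic if every finite subset with more
than one element is cyclic. -/
def CyclicSet (S : Set X) : Prop :=
  ∀ A : Finset X, ↑A ⊆ S → 1 < A.card → CyclicFinset (↑A : Set X)

/-- A necklace: a maximal cyclic subset with more than two elements. -/
def Necklace (S : Set X) : Prop :=
  CyclicSet S ∧ (∃ a ∈ S, ∃ b ∈ S, ∃ c ∈ S, a ≠ b ∧ a ≠ c ∧ b ≠ c) ∧
  ∀ S' : Set X, CyclicSet S' → S ⊆ S' → S' = S

/-- Membership in the collection `R`: necklaces, maximal inseparable sets,
and inseparable cut pairs. -/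
def InR (S : Set X) : Prop :=
  Necklace S ∨ MaxInsep S ∨ ∃ a b : X, InsepCutPair a b ∧ S = {a, b}

/-- `A` has exactly two connected components. -/
def TwoComponents (A : Set X) : Prop :=
  ∃ u ∈ A, ∃ v ∈ A, connectedComponentIn A u ≠ connectedComponentIn A v ∧
    ∀ w ∈ A, connectedComponentIn A w = connectedComponentIn A u ∨
      connectedComponentIn A w = connectedComponentIn A v

/-- `S`-equivalence of points of `X - S`: they lie in the same piece of every
cyclic decomposition of `X` by a finite subset of `S`. -/
def SEquiv (S : Set X) (y z : X) : Prop :=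
  y ∉ S ∧ z ∉ S ∧
  ∀ (n : ℕ) (x : ZMod n → X) (M : ZMod n → Set X),
    CyclicDecomp n x M → Set.range x ⊆ S → ∃ i, y ∈ M i ∧ z ∈ M i

end Defs

section Machine

variable {X : Type*} [TopologicalSpace X]

/-- component of `a` in the complement of `c`. -/
def Kc (a c : X) : Set X := connectedComponentIn ({c}ᶜ) a

/-- the branch hanging at `c` away from `a`. -/
def Wc (a c : X) : Set X := (Kc a c)ᶜ

def Bset (a : X) : Set X := {x | ∀ c, CutPoint c → x ∉ Wc a c \ {c}}

variable [T1Space X] [ConnectedSpace X] [LocallyConnectedSpace X] {a : X} (ha : ¬ CutPoint a)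

set_option linter.unusedSectionVars false

section CutBasics

variable {c : X} (hc : CutPoint c)

include ha hc

lemma a_ne : a ≠ c := fun h => ha (h ▸ hc)

lemma a_mem_compl : a ∈ ({c} : Set X)ᶜ := by simpa using a_ne ha hc

lemma a_mem_K : a ∈ Kc a c := mem_connectedComponentIn (a_mem_compl ha hc)

lemma a_not_mem_W : a ∉ Wc a c := fun h => h (a_mem_K ha hc)

omit ha hc

lemma K_open : IsOpen (Kc a c) := isOpen_compl_singleton.connectedComponentIn

lemma K_sub : Kc a c ⊆ ({c} : Set X)ᶜ := connectedComponentIn_subset _ _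

lemma K_preconn : IsPreconnected (Kc a c) := isPreconnected_connectedComponentIn

lemma c_mem_W : c ∈ Wc a c := fun h => (K_sub h) rfl

lemma W_closed : IsClosed (Wc a c) := (K_open (a := a) (c := c)).isClosed_compl

lemma comp_not_K {y : X} (hy : y ∈ Wc a c \ {c}) :
    connectedComponentIn ({c}ᶜ) y ⊆ Wc a c \ {c} := by
  intro z hz
  have hzc : z ∈ ({c} : Set X)ᶜ := connectedComponentIn_subset _ _ hz
  refine ⟨fun hzK => ?_, by simpa using hzc⟩
  have h1 : connectedComponentIn ({c}ᶜ : Set X) y = connectedComponentIn ({c}ᶜ) z :=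
    connectedComponentIn_eq hz
  have h2 : Kc a c = connectedComponentIn ({c}ᶜ : Set X) z := connectedComponentIn_eq hzK
  have hyc : y ∈ ({c} : Set X)ᶜ := by simpa using hy.2
  have hyK : y ∈ Kc a c := by
    rw [h2, ← h1]; exact mem_connectedComponentIn hyc
  exact hy.1 hyK

lemma Wdiff_open : IsOpen (Wc a c \ {c}) := by
  have : Wc a c \ {c} = ⋃ y ∈ Wc a c \ {c}, connectedComponentIn ({c}ᶜ) y := by
    apply Subset.antisymm
    · intro y hy
      exact mem_biUnion hy (mem_connectedComponentIn (by simpa using hy.2))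
    · exact iUnion₂_subset fun y hy => comp_not_K hy
  rw [this]
  exact isOpen_biUnion fun y _ => isOpen_compl_singleton.connectedComponentIn

lemma compl_single_eq : ({c} : Set X)ᶜ = Kc a c ∪ (Wc a c \ {c}) := by
  ext x
  constructor
  · intro hx
    by_cases hK : x ∈ Kc a c
    · exact Or.inl hK
    · exact Or.inr ⟨hK, by simpa using hx⟩
  · rintro (hx | hx)
    · exact K_sub hx
    · simpa using hx.2

lemma disjoint_K_Wdiff : Disjoint (Kc a c) (Wc a c \ {c}) :=
  disjoint_left.mpr fun _ hK hW => hW.1 hK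

/-- dichotomy: a preconnected set avoiding `c` lies in `Kc` or in the branch. -/
lemma dichotomy {S : Set X} (hS : IsPreconnected S) (hcS : c ∉ S) :
    S ⊆ Kc a c ∨ S ⊆ Wc a c \ {c} := by
  refine hS.subset_or_subset (K_open) (Wdiff_open) (disjoint_K_Wdiff) ?_
  rw [← compl_single_eq]
  intro x hx
  simp only [mem_compl_iff, mem_singleton_iff]
  rintro rfl; exact hcS hx
/-- closure of any component of the punctured space stays within comp ∪ {c},
and contains c. -/
lemma comp_closure {y : X} (hy : y ∈ ({c} : Set X)ᶜ) :
    closure (connectedComponentIn ({c}ᶜ) y) ⊆ connectedComponentIn ({c}ᶜ) y ∪ {c} ∧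
      c ∈ closure (connectedComponentIn ({c}ᶜ) y) := by
  set k := connectedComponentIn ({c}ᶜ : Set X) y with hk
  have hko : IsOpen k := isOpen_compl_singleton.connectedComponentIn
  have hsub : closure k ⊆ k ∪ {c} := by
    intro z hz
    by_cases hzc : z = c
    · exact Or.inr (by simp [hzc])
    · left
      have hzcc : z ∈ ({c} : Set X)ᶜ := by simpa using hzc
      have hzk : IsOpen (connectedComponentIn ({c}ᶜ : Set X) z) :=
        isOpen_compl_singleton.connectedComponentIn
      have hmem : z ∈ connectedComponentIn ({c}ᶜ : Set X) z := mem_connectedComponentIn hzcc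
      obtain ⟨w, hw1, hw2⟩ := mem_closure_iff.mp hz _ hzk hmem
      have e1 : connectedComponentIn ({c}ᶜ : Set X) z = connectedComponentIn ({c}ᶜ) w :=
        connectedComponentIn_eq hw1
      have e2 : connectedComponentIn ({c}ᶜ : Set X) y = connectedComponentIn ({c}ᶜ) w :=
        connectedComponentIn_eq (hk ▸ hw2)
      rw [hk, e2, ← e1]
      exact hmem
  refine ⟨hsub, ?_⟩
  by_contra hcc
  have hclosed : IsClosed k := by
    have : closure k = k := by
      apply Subset.antisymm _ subset_closure
      intro z hz
      rcases hsub hz with h | h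
      · exact h
      · exact absurd (h ▸ hz) hcc
    exact this ▸ isClosed_closure
  have hne : k.Nonempty := ⟨y, mem_connectedComponentIn hy⟩
  have h : k = univ := IsClopen.eq_univ ⟨hclosed, hko⟩ hne
  have : c ∈ k := h ▸ mem_univ c
  exact (connectedComponentIn_subset _ _ this) rfl

include ha hc in
lemma closure_K_sub : closure (Kc a c) ⊆ Kc a c ∪ {c} := (comp_closure (a_mem_compl ha hc)).1

include ha hc in
lemma c_mem_closure_K : c ∈ closure (Kc a c) := (comp_closure (a_mem_compl ha hc)).2

include ha hc in
lemma c_not_interior_W : c ∉ interior (Wc a c) := by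
  intro h
  obtain ⟨z, hz1, hz2⟩ := mem_closure_iff.mp (c_mem_closure_K ha hc) _ isOpen_interior h
  exact (interior_subset hz1) hz2

include hc in
lemma Wdiff_nonempty : (Wc a c \ {c}).Nonempty := by
  obtain ⟨U, V, ⟨⟨O1, hO1, rfl⟩, ⟨O2, hO2, rfl⟩, hdisj, hcover, hUne, hVne⟩⟩ := hc
  have hUo : IsOpen (O1 ∩ ({c} : Set X)ᶜ) := hO1.inter isOpen_compl_singleton
  have hVo : IsOpen (O2 ∩ ({c} : Set X)ᶜ) := hO2.inter isOpen_compl_singleton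
  have hKsub : Kc a c ⊆ (O1 ∩ {c}ᶜ) ∪ (O2 ∩ {c}ᶜ) := by rw [hcover]; exact K_sub
  rcases (K_preconn (a := a) (c := c)).subset_or_subset hUo hVo hdisj hKsub with h | h
  · obtain ⟨v, hv⟩ := hVne
    exact ⟨v, fun hvK => disjoint_left.mp hdisj (h hvK) hv, by simpa using hv.2⟩
  · obtain ⟨u, hu⟩ := hUne
    exact ⟨u, fun huK => disjoint_left.mp hdisj hu (h huK), by simpa using hu.2⟩

include ha hc in
lemma W_preconn : IsPreconnected (Wc a c) := by
  have key : ∀ y ∈ Wc a c \ {c}, IsPreconnected ({c} ∪ connectedComponentIn ({c}ᶜ) y)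
      ∧ ({c} ∪ connectedComponentIn ({c}ᶜ) y) ⊆ Wc a c := by
    intro y hy
    have hyc : y ∈ ({c} : Set X)ᶜ := by simpa using hy.2
    obtain ⟨hcl, hcc⟩ := comp_closure hyc
    constructor
    · apply isPreconnected_connectedComponentIn.subset_closure
      · exact subset_union_right
      · intro z hz
        rcases hz with hz | hz
        · exact hz ▸ hcc
        · exact subset_closure hz
    · rintro z (hz | hz)
      · exact (mem_singleton_iff.mp hz) ▸ c_mem_W
      · exact ((comp_not_K hy) hz).1
  obtain ⟨y0, hy0⟩ := Wdiff_nonempty (a := a) hc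
  have hWeq : Wc a c = ⋃₀ {S | ∃ y ∈ Wc a c \ {c}, S = {c} ∪ connectedComponentIn ({c}ᶜ) y} := by
    apply Subset.antisymm
    · intro w hw
      by_cases hwc : w = c
      · exact ⟨{c} ∪ connectedComponentIn ({c}ᶜ) y0, ⟨y0, hy0, rfl⟩, Or.inl (by simp [hwc])⟩
      · have hwW : w ∈ Wc a c \ {c} := ⟨hw, by simpa using hwc⟩
        have hwcc : w ∈ ({c} : Set X)ᶜ := by simpa using hwc
        exact ⟨{c} ∪ connectedComponentIn ({c}ᶜ) w, ⟨w, hwW, rfl⟩,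
          Or.inr (mem_connectedComponentIn hwcc)⟩
    · intro w hw
      obtain ⟨S, ⟨y, hy, rfl⟩, hwS⟩ := hw
      exact (key y hy).2 hwS
  rw [hWeq]
  apply isPreconnected_sUnion c
  · rintro S ⟨y, hy, rfl⟩; exact Or.inl rfl
  · rintro S ⟨y, hy, rfl⟩; exact (key y hy).1
include ha hc in
lemma sep_iff {x : X} : Separates ({c} : Set X) {a} {x} ↔ x ∈ Wc a c \ {c} := by
  constructor
  · rintro ⟨U, V, ⟨⟨O1, hO1, rfl⟩, ⟨O2, hO2, rfl⟩, hdisj, hcover, _, _⟩, haU, hxV⟩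
    have hUo : IsOpen (O1 ∩ ({c} : Set X)ᶜ) := hO1.inter isOpen_compl_singleton
    have hVo : IsOpen (O2 ∩ ({c} : Set X)ᶜ) := hO2.inter isOpen_compl_singleton
    have hKsub : Kc a c ⊆ (O1 ∩ {c}ᶜ) ∪ (O2 ∩ {c}ᶜ) := by rw [hcover]; exact K_sub
    have hxV' := hxV rfl
    rcases (K_preconn (a := a) (c := c)).subset_or_subset hUo hVo hdisj hKsub with h | h
    · refine ⟨fun hxK => disjoint_left.mp hdisj (h hxK) hxV', by simpa using hxV'.2⟩
    · exact absurd (h (a_mem_K ha hc)) fun hmem => disjoint_left.mp hdisj (haU rfl) hmem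
  · intro hx
    refine ⟨Kc a c, Wc a c \ {c}, ⟨⟨Kc a c, K_open, by
        simp [Set.inter_eq_self_of_subset_left (K_sub (a := a) (c := c))]⟩,
      ⟨Wc a c \ {c}, Wdiff_open, by
        apply Subset.antisymm (subset_inter Subset.rfl ?_) inter_subset_left
        intro z hz; simpa using hz.2⟩,
      disjoint_K_Wdiff, (compl_single_eq).symm, ⟨a, a_mem_K ha hc⟩, ⟨x, hx⟩⟩,
      by simpa using a_mem_K ha hc, by simpa using hx⟩

include ha in
lemma a_mem_B : a ∈ Bset a := fun c hc => fun h => a_not_mem_W ha hc h.1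

lemma B_closed : IsClosed (Bset a) := by
  have : Bset a = ⋂ c ∈ {c : X | CutPoint c}, (Wc a c \ {c})ᶜ := by
    ext x; simp [Bset, mem_iInter]
  rw [this]
  exact isClosed_biInter fun c _ => (Wdiff_open).isClosed_compl

include ha in
/-- key nesting : branches are nested or disjoint. -/
lemma nesting {c d : X} (hc : CutPoint c) (hd : CutPoint d)
    (hne : (Wc a c ∩ Wc a d).Nonempty) : Wc a c ⊆ Wc a d ∨ Wc a d ⊆ Wc a c := by
  obtain ⟨z, hzc, hzd⟩ := hne
  by_cases hdc : d ∈ Wc a c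
  · by_cases hcd : c ∈ Wc a d
    · -- both roots in each other's branch: K's are equal
      have h1 : Kc a c ⊆ Kc a d := by
        rcases dichotomy (c := d) (K_preconn (a := a) (c := c)) hdc with h | h
        · exact h
        · exact absurd (h (a_mem_K ha hc)) (fun hw => (a_not_mem_W ha hd) hw.1)
      have h2 : Kc a d ⊆ Kc a c := by
        rcases dichotomy (c := c) (K_preconn (a := a) (c := d)) hcd with h | h
        · exact h
        · exact absurd (h (a_mem_K ha hd)) (fun hw => (a_not_mem_W ha hc) hw.1)
      have : Wc a c = Wc a d := by
        unfold Wc; rw [Subset.antisymm h1 h2]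
      exact Or.inl this.le
    · -- c ∉ Wc a d : Wd avoids c, so Wd ⊆ Kc or Wd ⊆ Wc \ {c}
      rcases dichotomy (W_preconn ha hd) hcd with h | h
      · exact absurd (h hzd) hzc
      · exact Or.inr (fun w hw => (h hw).1)
  · rcases dichotomy (W_preconn ha hc) hdc with h | h
    · exact absurd (h hzc) hzd
    · exact Or.inl (fun w hw => (h hw).1)
include ha in
lemma W_eq_of_mutual {c d : X} (hc : CutPoint c) (hd : CutPoint d)
    (hdc : d ∈ Wc a c) (hcd : c ∈ Wc a d) : Wc a c = Wc a d := by
  have h1 : Kc a c ⊆ Kc a d := by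
    rcases dichotomy (c := d) (K_preconn (a := a) (c := c)) hdc with h | h
    · exact h
    · exact absurd (h (a_mem_K ha hc)) (fun hw => (a_not_mem_W ha hd) hw.1)
  have h2 : Kc a d ⊆ Kc a c := by
    rcases dichotomy (c := c) (K_preconn (a := a) (c := d)) hcd with h | h
    · exact h
    · exact absurd (h (a_mem_K ha hd)) (fun hw => (a_not_mem_W ha hc) hw.1)
  unfold Wc; rw [Subset.antisymm h1 h2]

include ha in
lemma root_eq_of_W_eq {c d : X} (hc : CutPoint c) (hd : CutPoint d)
    (h : Wc a c = Wc a d) : c = d := by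
  by_contra hne
  apply c_not_interior_W ha hc
  have h1 : c ∈ Wc a d \ {d} := ⟨h ▸ c_mem_W, by simpa using hne⟩
  exact mem_interior.mpr ⟨Wc a d \ {d}, fun w hw => h.symm ▸ hw.1, Wdiff_open, h1⟩

include ha in
lemma strict_root {c d : X} (hc : CutPoint c) (hd : CutPoint d)
    (h : Wc a c ⊆ Wc a d) (hdm : d ∈ Wc a c) : c = d :=
  root_eq_of_W_eq ha hc hd (W_eq_of_mutual ha hc hd hdm (h c_mem_W))

end CutBasics

section Branch

/-- the cut points whose branch properly carries `x`. -/
def CxSet (a x : X) : Set X := {c | CutPoint c ∧ x ∈ Wc a c \ {c}}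

/-- the branch cluster through `x` (for `x ∉ Bset a`). -/
def Omega (a x : X) : Set X := ⋃ c ∈ CxSet a x, (Wc a c \ {c})

/-- the attachment point (root) of the branch cluster of `x`. -/
noncomputable def groot (a x : X) : X :=
  Classical.epsilon (fun g => g ∈ closure (Omega a x) \ Omega a x)

variable {x : X} (hx : x ∉ Bset a)

lemma omega_open : IsOpen (Omega a x) :=
  isOpen_biUnion fun c _ => Wdiff_open

lemma omega_B_disjoint : ∀ z ∈ Omega a x, z ∉ Bset a := by
  intro z hz hzB
  obtain ⟨c, hc, hzc⟩ := mem_iUnion₂.mp hz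
  exact hzB c hc.1 hzc

include hx in
lemma Cx_nonempty : (CxSet a x).Nonempty := by
  simp only [Bset, mem_setOf_eq] at hx
  push_neg at hx
  obtain ⟨c, hc, hxc⟩ := hx
  exact ⟨c, hc, hxc⟩

include hx in
lemma mem_omega_self : x ∈ Omega a x := by
  obtain ⟨c, hc⟩ := Cx_nonempty hx
  exact mem_biUnion hc hc.2

include ha hx in
lemma fr_nonempty : (closure (Omega a x) \ Omega a x).Nonempty := by
  by_contra h
  rw [Set.not_nonempty_iff_eq_empty, diff_eq_empty] at h
  have hclopen : IsClopen (Omega a x) :=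
    ⟨closure_subset_iff_isClosed.mp h, omega_open⟩
  have huniv : Omega a x = univ :=
    hclopen.eq_univ ⟨x, mem_omega_self hx⟩
  have : a ∈ Omega a x := huniv ▸ mem_univ a
  obtain ⟨c, hc, hac⟩ := mem_iUnion₂.mp this
  exact a_not_mem_W ha hc.1 hac.1

include ha hx in
lemma groot_spec : groot a x ∈ closure (Omega a x) \ Omega a x :=
  Classical.epsilon_spec (p := fun g => g ∈ closure (Omega a x) \ Omega a x) (fr_nonempty ha hx)

/-- any preconnected open set around a frontier point of the branch cluster contains a root. -/
lemma roots_near {g : X} (hg : g ∈ closure (Omega a x) \ Omega a x)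
    {N : Set X} (hNo : IsOpen N) (hNc : IsPreconnected N) (hgN : g ∈ N) :
    ∃ c ∈ CxSet a x, c ∈ N := by
  obtain ⟨z, hzN, hzO⟩ := mem_closure_iff.mp hg.1 _ hNo hgN
  obtain ⟨c, hc, hzc⟩ := mem_iUnion₂.mp hzO
  by_cases hcN : c ∈ N
  · exact ⟨c, hc, hcN⟩
  · rcases dichotomy (c := c) hNc hcN with h | h
    · exact absurd (h hzN) hzc.1
    · exact absurd (mem_biUnion hc (h hgN)) hg.2
end Branch

end Machine

section Metric

variable {X : Type*} [MetricSpace X] [CompactSpace X] [ConnectedSpace X]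
  [LocallyConnectedSpace X] {a : X} (ha : ¬ CutPoint a)

set_option linter.unusedSectionVars false

lemma conn_nbhd {x : X} {U : Set X} (hU : IsOpen U) (hxU : x ∈ U) :
    ∃ N : Set X, N ⊆ U ∧ IsOpen N ∧ x ∈ N ∧ IsPreconnected N := by
  obtain ⟨V, hVU, hVo, hxV, hVc⟩ :=
    locallyConnectedSpace_iff_subsets_isOpen_isConnected.mp
      (inferInstance : LocallyConnectedSpace X) x U (hU.mem_nhds hxU)
  exact ⟨V, hVU, hVo, hxV, hVc.isPreconnected⟩

variable {x : X} (hx : x ∉ Bset a)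

include ha hx

lemma fr_subsing {g g' : X} (hg : g ∈ closure (Omega a x) \ Omega a x)
    (hg' : g' ∈ closure (Omega a x) \ Omega a x) : g = g' := by
  by_contra hne
  have hr : 0 < dist g g' := dist_pos.mpr hne
  obtain ⟨N, hNsub, hNo, hgN, hNc⟩ :=
    conn_nbhd (Metric.isOpen_ball (x := g) (ε := dist g g' / 2))
      (Metric.mem_ball_self (by linarith))
  obtain ⟨N', hNsub', hNo', hgN', hNc'⟩ :=
    conn_nbhd (Metric.isOpen_ball (x := g') (ε := dist g g' / 2))
      (Metric.mem_ball_self (by linarith))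
  have hdisj : ∀ w, w ∈ N → w ∈ N' → False := by
    intro w hw hw'
    have h1 := Metric.mem_ball.mp (hNsub hw)
    have h2 := Metric.mem_ball.mp (hNsub' hw')
    have ht := dist_triangle g w g'
    have e1 : dist g w = dist w g := dist_comm g w
    linarith [h1, h2]
  obtain ⟨c, hc, hcN⟩ := roots_near hg hNo hNc hgN
  obtain ⟨d, hd, hdN⟩ := roots_near hg' hNo' hNc' hgN'
  have hcd : c ≠ d := fun h => hdisj c hcN (h ▸ hdN)
  have aux : ∀ (gg : X) (NN : Set X) (cc dd : X), gg ∈ closure (Omega a x) \ Omega a x →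
      IsPreconnected NN → gg ∈ NN → cc ∈ CxSet a x → cc ∈ NN → dd ∈ CxSet a x →
      dd ∉ NN → Wc a cc ⊆ Wc a dd → False := by
    intro gg NN cc dd hgg hNNc hggN hcc hccN hdd hddN hsub
    rcases dichotomy (c := dd) hNNc hddN with h | h
    · exact (hsub c_mem_W) (h hccN)
    · exact hgg.2 (mem_biUnion hdd (h hggN))
  have hWne : (Wc a c ∩ Wc a d).Nonempty := ⟨x, hc.2.1, hd.2.1⟩
  rcases nesting ha hc.1 hd.1 hWne with h | h
  · exact aux g N c d hg hNc hgN hc hcN hd (fun hdN2 => hdisj d hdN2 hdN) h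
  · exact aux g' N' d c hg' hNc' hgN' hd hdN hc (fun hcN2 => hdisj c hcN hcN2) h

lemma groot_eq_fr {g : X} (hg : g ∈ closure (Omega a x) \ Omega a x) : g = groot a x :=
  fr_subsing ha hx hg (groot_spec ha hx)

lemma closure_omega_eq : closure (Omega a x) = Omega a x ∪ {groot a x} := by
  apply Subset.antisymm
  · intro z hz
    by_cases hzO : z ∈ Omega a x
    · exact Or.inl hzO
    · exact Or.inr (by simpa using groot_eq_fr ha hx ⟨hz, hzO⟩)
  · rintro z (hz | hz)
    · exact subset_closure hz
    · exact (mem_singleton_iff.mp hz) ▸ (groot_spec ha hx).1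

omit hx

lemma omega_subset_omega {y : X} (hy : y ∈ Omega a x) : Omega a x ⊆ Omega a y := by
  obtain ⟨c0, hc0, hyc0⟩ := mem_iUnion₂.mp hy
  have hc0y : c0 ∈ CxSet a y := ⟨hc0.1, hyc0⟩
  intro w hw
  obtain ⟨d, hd, hwd⟩ := mem_iUnion₂.mp hw
  have hWne : (Wc a c0 ∩ Wc a d).Nonempty := ⟨x, hc0.2.1, hd.2.1⟩
  rcases nesting ha hc0.1 hd.1 hWne with h | h
  · -- Wc0 ⊆ Wd
    by_cases hdm : d ∈ Wc a c0
    · have : c0 = d := strict_root ha hc0.1 hd.1 h hdm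
      exact mem_biUnion hc0y (this ▸ hwd)
    · have hyd : y ∈ Wc a d \ {d} :=
        ⟨h hyc0.1, by simp; rintro rfl; exact hdm hyc0.1⟩
      exact mem_biUnion (⟨hd.1, hyd⟩ : d ∈ CxSet a y) hwd
  · -- Wd ⊆ Wc0
    by_cases hcm : c0 ∈ Wc a d
    · have : d = c0 := strict_root ha hd.1 hc0.1 h hcm
      exact mem_biUnion hc0y (this ▸ hwd)
    · have : w ∈ Wc a c0 \ {c0} :=
        ⟨h hwd.1, by simp; rintro rfl; exact hcm hwd.1⟩
      exact mem_biUnion hc0y this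
lemma omega_eq {y : X} (hy : y ∈ Omega a x) : Omega a y = Omega a x := by
  obtain ⟨c0, hc0, hyc0⟩ := mem_iUnion₂.mp hy
  have hxx : x ∈ Omega a x := mem_biUnion hc0 hc0.2
  exact Subset.antisymm (omega_subset_omega ha (omega_subset_omega ha hy hxx))
    (omega_subset_omega ha hy)

lemma groot_const {y : X} (hy : y ∈ Omega a x) : groot a y = groot a x := by
  unfold groot; rw [omega_eq ha hy]

include hx in
lemma root_mem_B : groot a x ∈ Bset a := by
  by_contra hgB
  obtain ⟨d, hd, hgd⟩ := Cx_nonempty hgB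
  have hg := groot_spec ha hx
  obtain ⟨z, hz1, hz2⟩ := mem_closure_iff.mp hg.1 _ (Wdiff_open (a := a) (c := d)) hgd
  obtain ⟨c, hc, hzc⟩ := mem_iUnion₂.mp hz2
  have hWne : (Wc a c ∩ Wc a d).Nonempty := ⟨z, hzc.1, hz1.1⟩
  rcases nesting ha hc.1 hd hWne with h | h
  · by_cases hdm : d ∈ Wc a c
    · have : c = d := strict_root ha hc.1 hd h hdm
      exact hg.2 (mem_biUnion hc (this ▸ hgd))
    · have hxd : x ∈ Wc a d \ {d} := ⟨h hc.2.1, by simp; rintro rfl; exact hdm hc.2.1⟩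
      exact hg.2 (mem_biUnion (⟨hd, hxd⟩ : d ∈ CxSet a x) hgd)
  · by_cases hcm : c ∈ Wc a d
    · have : d = c := strict_root ha hd hc.1 h hcm
      exact hg.2 (mem_biUnion hc (by rw [← this]; exact hgd))
    · have : groot a x ∈ Wc a c \ {c} := ⟨h hgd.1, by simp; rintro rfl; exact hcm hgd.1⟩
      exact hg.2 (mem_biUnion hc this)

include hx in
lemma key_nbhd {N : Set X} (hNc : IsPreconnected N) {z w : X} (hz : z ∈ N)
    (hzO : z ∈ Omega a x) (hw : w ∈ N) (hwO : w ∉ Omega a x) : groot a x ∈ N := by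
  by_contra h
  have hcov : N ⊆ Omega a x ∪ (closure (Omega a x))ᶜ := by
    intro y hy
    by_cases hyc : y ∈ closure (Omega a x)
    · rcases (closure_omega_eq ha hx ▸ hyc) with h1 | h1
      · exact Or.inl h1
      · exact absurd (mem_singleton_iff.mp h1 ▸ hy) h
    · exact Or.inr hyc
  have hdisj : Disjoint (Omega a x) (closure (Omega a x))ᶜ :=
    disjoint_left.mpr fun y hy hyc => hyc (subset_closure hy)
  rcases hNc.subset_or_subset omega_open isClosed_closure.isOpen_compl hdisj hcov with h1 | h1
  · exact hwO (h1 hw)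
  · exact (h1 hz) (subset_closure hzO)

omit hx

lemma main_conn {N : Set X} (hNo : IsOpen N) (hNc : IsPreconnected N) :
    IsPreconnected (N ∩ Bset a) := by
  intro u v hu hv hsub ⟨p, hp⟩ ⟨q, hq⟩
  by_contra hno
  rw [Set.not_nonempty_iff_eq_empty] at hno
  set SU := (N ∩ Bset a ∩ u) ∪ {w | w ∈ N ∧ w ∉ Bset a ∧ groot a w ∈ u} with hSU
  set SV := (N ∩ Bset a ∩ v) ∪ {w | w ∈ N ∧ w ∉ Bset a ∧ groot a w ∉ u} with hSV
  have hSUo : IsOpen SU := by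
    rw [isOpen_iff_forall_mem_open]
    rintro w (⟨⟨hwN, hwB⟩, hwu⟩ | ⟨hwN, hwB, hwg⟩)
    · obtain ⟨N', hN'sub, hN'o, hwN', hN'c⟩ := conn_nbhd (hNo.inter hu) ⟨hwN, hwu⟩
      refine ⟨N', ?_, hN'o, hwN'⟩
      intro y hy
      by_cases hyB : y ∈ Bset a
      · exact Or.inl ⟨⟨(hN'sub hy).1, hyB⟩, (hN'sub hy).2⟩
      · have hgN' : groot a y ∈ N' :=
          key_nbhd ha hyB hN'c hy (mem_omega_self hyB) hwN'
            (fun hmem => (omega_B_disjoint w hmem) hwB)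
        exact Or.inr ⟨(hN'sub hy).1, hyB, (hN'sub hgN').2⟩
    · refine ⟨Omega a w ∩ N, ?_, (omega_open).inter hNo, mem_omega_self hwB, hwN⟩
      intro y ⟨hyO, hyN⟩
      exact Or.inr ⟨hyN, omega_B_disjoint y hyO, (groot_const ha hyO) ▸ hwg⟩
  have hSVo : IsOpen SV := by
    rw [isOpen_iff_forall_mem_open]
    rintro w (⟨⟨hwN, hwB⟩, hwv⟩ | ⟨hwN, hwB, hwg⟩)
    · obtain ⟨N', hN'sub, hN'o, hwN', hN'c⟩ := conn_nbhd (hNo.inter hv) ⟨hwN, hwv⟩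
      refine ⟨N', ?_, hN'o, hwN'⟩
      intro y hy
      by_cases hyB : y ∈ Bset a
      · exact Or.inl ⟨⟨(hN'sub hy).1, hyB⟩, (hN'sub hy).2⟩
      · have hgN' : groot a y ∈ N' :=
          key_nbhd ha hyB hN'c hy (mem_omega_self hyB) hwN'
            (fun hmem => (omega_B_disjoint w hmem) hwB)
        refine Or.inr ⟨(hN'sub hy).1, hyB, fun hgu => ?_⟩
        have : groot a y ∈ N ∩ Bset a ∩ (u ∩ v) :=
          ⟨⟨(hN'sub hgN').1, root_mem_B ha hyB⟩, hgu, (hN'sub hgN').2⟩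
        exact absurd this (by rw [hno]; exact notMem_empty _)
    · refine ⟨Omega a w ∩ N, ?_, (omega_open).inter hNo, mem_omega_self hwB, hwN⟩
      intro y ⟨hyO, hyN⟩
      exact Or.inr ⟨hyN, omega_B_disjoint y hyO, (groot_const ha hyO) ▸ hwg⟩
  have hNsub : N ⊆ SU ∪ SV := by
    intro w hwN
    by_cases hwB : w ∈ Bset a
    · rcases hsub ⟨hwN, hwB⟩ with h | h
      · exact Or.inl (Or.inl ⟨⟨hwN, hwB⟩, h⟩)
      · exact Or.inr (Or.inl ⟨⟨hwN, hwB⟩, h⟩)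
    · by_cases hwg : groot a w ∈ u
      · exact Or.inl (Or.inr ⟨hwN, hwB, hwg⟩)
      · exact Or.inr (Or.inr ⟨hwN, hwB, hwg⟩)
  have hpS : (N ∩ SU).Nonempty := ⟨p, hp.1.1, Or.inl ⟨hp.1, hp.2⟩⟩
  have hqS : (N ∩ SV).Nonempty := ⟨q, hq.1.1, Or.inl ⟨hq.1, hq.2⟩⟩
  obtain ⟨y, hyN, hySU, hySV⟩ := hNc SU SV hSUo hSVo hNsub hpS hqS
  rcases hySU with h1 | h1 <;> rcases hySV with h2 | h2
  · have : y ∈ N ∩ Bset a ∩ (u ∩ v) := ⟨h1.1, h1.2, h2.2⟩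
    exact absurd this (by rw [hno]; exact notMem_empty _)
  · exact h2.2.1 h1.1.2
  · exact h1.2.1 h2.1.2
  · exact h2.2.2 h1.2.2

lemma B_preconn : IsPreconnected (Bset a) := by
  have := main_conn ha (isOpen_univ (X := X)) isPreconnected_univ
  simpa using this
include ha in
lemma B_cut_countable : {c : X | CutPoint c ∧ c ∈ Bset a}.Countable := by
  apply Set.PairwiseDisjoint.countable_of_isOpen
    (s := fun c => Wc a c \ {c}) (a := {c : X | CutPoint c ∧ c ∈ Bset a})
  · intro c hc d hd hcd
    refine disjoint_left.mpr fun w hwc hwd => ?_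
    have hdc : d ∉ Wc a c := by
      intro hmem
      exact hd.2 c hc.1 ⟨hmem, by simpa using hcd.symm⟩
    have hcd' : c ∉ Wc a d := by
      intro hmem
      exact hc.2 d hd.1 ⟨hmem, by simpa using hcd⟩
    have hne : (Wc a c ∩ Wc a d).Nonempty := ⟨w, hwc.1, hwd.1⟩
    rcases nesting ha hc.1 hd.1 hne with h | h
    · exact hcd' (h c_mem_W)
    · exact hdc (h c_mem_W)
  · exact fun c _ => Wdiff_open
  · exact fun c hc => Wdiff_nonempty hc.1

end Metric


/-- the closure of a nonsingleton cut-point equivalence class of a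
Peano continuum is a Peano continuum without cut points. -/
theorem stmt15 {X : Type*} [MetricSpace X] [CompactSpace X] [ConnectedSpace X]
    [LocallyConnectedSpace X]
    (a : X) (ha : ¬CutPoint a) (A : Set X)
    (hA : A = {b : X | b = a ∨ (¬CutPoint b ∧
      ∀ c : X, CutPoint c → ¬Separates ({c} : Set X) {a} {b})})
    (hnt : A.Nontrivial) :
    CompactSpace ↥(closure A) ∧ ConnectedSpace ↥(closure A) ∧
    LocallyConnectedSpace ↥(closure A) ∧
    ∀ e : ↥(closure A), ¬CutPoint e := by
  have hAiff : ∀ x, x ∈ A ↔ x ∈ Bset a ∧ (x = a ∨ ¬CutPoint x) := by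
    intro x
    rw [hA]; simp only [mem_setOf_eq]
    constructor
    · rintro (rfl | ⟨hnc, hsep⟩)
      · exact ⟨a_mem_B ha, Or.inl rfl⟩
      · exact ⟨fun c hc hmem => hsep c hc ((sep_iff ha hc).mpr hmem), Or.inr hnc⟩
    · rintro ⟨hB, (rfl | hnc)⟩
      · exact Or.inl rfl
      · exact Or.inr ⟨hnc, fun c hc hsep => hB c hc ((sep_iff ha hc).mp hsep)⟩
  have hAB : A ⊆ Bset a := fun x hx => ((hAiff x).mp hx).1
  have hBnt : (Bset a).Nontrivial := hnt.mono hAB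
  have hclA : closure A = Bset a := by
    apply Subset.antisymm (closure_minimal hAB B_closed)
    intro b hb
    rw [mem_closure_iff]
    intro o ho hbo
    obtain ⟨N, hNsub, hNo, hbN, hNc⟩ := conn_nbhd ho hbo
    have hs : IsPreconnected (N ∩ Bset a) := main_conn ha hNo hNc
    -- find a second point of N ∩ B
    have hbig := B_preconn ha N ({b}ᶜ) hNo isOpen_compl_singleton
      (fun y _ => by
        by_cases hyb : y = b
        · exact Or.inl (hyb ▸ hbN)
        · exact Or.inr (by simpa using hyb))
      ⟨b, hb, hbN⟩
      (by
        obtain ⟨w1, hw1, w2, hw2, hww⟩ := hBnt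
        by_cases h1 : w1 = b
        · exact ⟨w2, hw2, by simpa using (h1 ▸ hww).symm⟩
        · exact ⟨w1, hw1, by simpa using h1⟩)
    obtain ⟨b2, hb2B, hb2N, hb2ne⟩ := hbig
    have hb2ne' : b2 ≠ b := by simpa using hb2ne
    -- N ∩ B is uncountable, hence contains a non-cut point
    obtain ⟨y, hy, hync⟩ : ∃ y ∈ N ∩ Bset a, ¬CutPoint y := by
      by_contra hall
      push_neg at hall
      have hsubC : N ∩ Bset a ⊆ {c : X | CutPoint c ∧ c ∈ Bset a} :=
        fun y hy => ⟨hall y hy, hy.2⟩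
      have hcnt : (N ∩ Bset a).Countable := (B_cut_countable ha).mono hsubC
      set f : X → ℝ := fun y => dist b y with hf
      have himg : IsPreconnected (f '' (N ∩ Bset a)) :=
        hs.image f ((continuous_dist.comp (Continuous.prodMk_right b) ).continuousOn)
      have h0 : (0 : ℝ) ∈ f '' (N ∩ Bset a) := ⟨b, ⟨hbN, hb⟩, by simp [hf]⟩
      have hr0 : dist b b2 ∈ f '' (N ∩ Bset a) := ⟨b2, ⟨hb2N, hb2B⟩, rfl⟩
      have hIcc : Icc (0 : ℝ) (dist b b2) ⊆ f '' (N ∩ Bset a) :=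
        himg.Icc_subset h0 hr0
      have hIccC : (Icc (0 : ℝ) (dist b b2)).Countable :=
        (hcnt.image f).mono hIcc
      have hlt : (0 : ℝ) < dist b b2 := dist_pos.mpr (Ne.symm hb2ne')
      have := Cardinal.mk_le_aleph0_iff.mpr (Set.countable_coe_iff.mpr hIccC)
      rw [Cardinal.mk_Icc_real hlt] at this
      exact absurd this (not_le.mpr Cardinal.aleph0_lt_continuum)
    exact ⟨y, hNsub hy.1, (hAiff y).mpr ⟨hy.2, Or.inr hync⟩⟩
  rw [hclA]
  refine ⟨?_, ?_, ?_, ?_⟩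
  · exact isCompact_iff_compactSpace.mp B_closed.isCompact
  · exact Subtype.connectedSpace ⟨⟨a, a_mem_B ha⟩, B_preconn ha⟩
  · -- local connectedness
    apply locallyConnectedSpace_iff_subsets_isOpen_isConnected.mpr
    rintro ⟨b, hb⟩ U hU
    rw [nhds_subtype_eq_comap] at hU
    obtain ⟨t, ht, htU⟩ := Filter.mem_comap.mp hU
    obtain ⟨o, hot, ho, hbo⟩ := mem_nhds_iff.mp ht
    obtain ⟨N, hNo', hNoo, hbN, hNc⟩ := conn_nbhd ho hbo
    refine ⟨Subtype.val ⁻¹' N, fun z hz => htU (hot (hNo' hz)), hNoo.preimage continuous_subtype_val,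
      hbN, ⟨⟨b, hb⟩, hbN⟩, ?_⟩
    have himage : Subtype.val '' (Subtype.val ⁻¹' N : Set ↥(Bset a)) = Bset a ∩ N := by
      rw [Subtype.image_preimage_coe]
    have := main_conn ha hNoo hNc
    rw [inter_comm] at this
    rw [← himage] at this
    exact (Topology.IsInducing.subtypeVal.isPreconnected_image).mp this
  · -- no cut points
    rintro e hcut
    obtain ⟨U, V, ⟨O1s, hO1s, rfl⟩, ⟨O2s, hO2s, rfl⟩, hdisj, hcover, hUne, hVne⟩ := hcut
    obtain ⟨O1, hO1, hO1p⟩ := isOpen_induced_iff.mp hO1s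
    obtain ⟨O2, hO2, hO2p⟩ := isOpen_induced_iff.mp hO2s
    set P : Set X := Subtype.val '' (O1s ∩ ({e} : Set ↥(Bset a))ᶜ) with hPdef
    set Q : Set X := Subtype.val '' (O2s ∩ ({e} : Set ↥(Bset a))ᶜ) with hQdef
    have hPmem : ∀ w : X, w ∈ P ↔ w ∈ Bset a ∧ w ∈ O1 ∧ w ≠ (e : X) := by
      intro w
      constructor
      · rintro ⟨w', ⟨hw1, hw2⟩, rfl⟩
        refine ⟨w'.2, ?_, ?_⟩
        · rw [← hO1p] at hw1; exact hw1
        · intro h; exact hw2 (by simpa using Subtype.ext h)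
      · rintro ⟨hwB, hwO, hwe⟩
        exact ⟨⟨w, hwB⟩, ⟨by rw [← hO1p] at *; exact hwO, by simp only [mem_compl_iff, mem_singleton_iff]; exact fun h => hwe (congrArg Subtype.val h)⟩, rfl⟩
    have hQmem : ∀ w : X, w ∈ Q ↔ w ∈ Bset a ∧ w ∈ O2 ∧ w ≠ (e : X) := by
      intro w
      constructor
      · rintro ⟨w', ⟨hw1, hw2⟩, rfl⟩
        refine ⟨w'.2, ?_, ?_⟩
        · rw [← hO2p] at hw1; exact hw1
        · intro h; exact hw2 (by simpa using Subtype.ext h)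
      · rintro ⟨hwB, hwO, hwe⟩
        exact ⟨⟨w, hwB⟩, ⟨by rw [← hO2p] at *; exact hwO, by simp only [mem_compl_iff, mem_singleton_iff]; exact fun h => hwe (congrArg Subtype.val h)⟩, rfl⟩
    have hPQ : ∀ w : X, w ∈ Bset a → w ≠ (e : X) → (w ∈ P ∨ w ∈ Q) := by
      intro w hwB hwe
      have : (⟨w, hwB⟩ : ↥(Bset a)) ∈ (O1s ∩ ({e}ᶜ)) ∪ (O2s ∩ ({e}ᶜ)) := by
        rw [hcover]
        simp only [mem_compl_iff, mem_singleton_iff]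
        exact fun h => hwe (congrArg Subtype.val h)
      rcases this with h | h
      · exact Or.inl ⟨⟨w, hwB⟩, h, rfl⟩
      · exact Or.inr ⟨⟨w, hwB⟩, h, rfl⟩
    have hPQdisj : ∀ w : X, w ∈ P → w ∈ Q → False := by
      intro w hwP hwQ
      obtain ⟨w1, hw1, he1⟩ := hwP
      obtain ⟨w2, hw2, he2⟩ := hwQ
      have : w1 = w2 := Subtype.ext (he1.trans he2.symm)
      exact (disjoint_left.mp hdisj hw1) (this ▸ hw2)
    -- build the separation of X at ↑e
    set SU : Set X := P ∪ {w | w ∉ Bset a ∧ (groot a w ∈ P ∨ groot a w = (e : X))} with hSUdef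
    set SV : Set X := Q ∪ {w | w ∉ Bset a ∧ groot a w ∈ Q} with hSVdef
    have hSUo : IsOpen SU := by
      rw [isOpen_iff_forall_mem_open]
      rintro w (hwP | ⟨hwB, hwg⟩)
      · obtain ⟨hwB, hwO, hwe⟩ := (hPmem w).mp hwP
        have hGo : IsOpen (O1 ∩ ({(e : X)} : Set X)ᶜ) := hO1.inter isOpen_compl_singleton
        obtain ⟨N, hNsub, hNo, hwN, hNc⟩ := conn_nbhd hGo ⟨hwO, by simpa using hwe⟩
        refine ⟨N, ?_, hNo, hwN⟩
        intro y hy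
        by_cases hyB : y ∈ Bset a
        · exact Or.inl ((hPmem y).mpr ⟨hyB, (hNsub hy).1, by simpa using (hNsub hy).2⟩)
        · have hgN : groot a y ∈ N :=
            key_nbhd ha hyB hNc hy (mem_omega_self hyB) hwN
              (fun hmem => (omega_B_disjoint w hmem) hwB)
          have hgB : groot a y ∈ Bset a := root_mem_B ha hyB
          exact Or.inr ⟨hyB, Or.inl ((hPmem _).mpr
            ⟨hgB, (hNsub hgN).1, by simpa using (hNsub hgN).2⟩)⟩
      · refine ⟨Omega a w, ?_, omega_open, mem_omega_self hwB⟩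
        intro y hyO
        exact Or.inr ⟨omega_B_disjoint y hyO, (groot_const ha hyO) ▸ hwg⟩
    have hSVo : IsOpen SV := by
      rw [isOpen_iff_forall_mem_open]
      rintro w (hwQ | ⟨hwB, hwg⟩)
      · obtain ⟨hwB, hwO, hwe⟩ := (hQmem w).mp hwQ
        have hGo : IsOpen (O2 ∩ ({(e : X)} : Set X)ᶜ) := hO2.inter isOpen_compl_singleton
        obtain ⟨N, hNsub, hNo, hwN, hNc⟩ := conn_nbhd hGo ⟨hwO, by simpa using hwe⟩
        refine ⟨N, ?_, hNo, hwN⟩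
        intro y hy
        by_cases hyB : y ∈ Bset a
        · exact Or.inl ((hQmem y).mpr ⟨hyB, (hNsub hy).1, by simpa using (hNsub hy).2⟩)
        · have hgN : groot a y ∈ N :=
            key_nbhd ha hyB hNc hy (mem_omega_self hyB) hwN
              (fun hmem => (omega_B_disjoint w hmem) hwB)
          have hgB : groot a y ∈ Bset a := root_mem_B ha hyB
          exact Or.inr ⟨hyB, (hQmem _).mpr
            ⟨hgB, (hNsub hgN).1, by simpa using (hNsub hgN).2⟩⟩
      · refine ⟨Omega a w, ?_, omega_open, mem_omega_self hwB⟩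
        intro y hyO
        exact Or.inr ⟨omega_B_disjoint y hyO, (groot_const ha hyO) ▸ hwg⟩
    have heB : (e : X) ∈ Bset a := e.2
    have hSUsub : SU ⊆ ({(e : X)} : Set X)ᶜ := by
      rintro w (hwP | ⟨hwB, _⟩)
      · simpa using ((hPmem w).mp hwP).2.2
      · simp only [mem_compl_iff, mem_singleton_iff]
        rintro rfl; exact hwB heB
    have hSVsub : SV ⊆ ({(e : X)} : Set X)ᶜ := by
      rintro w (hwQ | ⟨hwB, _⟩)
      · simpa using ((hQmem w).mp hwQ).2.2
      · simp only [mem_compl_iff, mem_singleton_iff]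
        rintro rfl; exact hwB heB
    have hsep : SepPair ({(e : X)} : Set X) SU SV := by
      refine ⟨⟨SU, hSUo, (Set.inter_eq_self_of_subset_left hSUsub).symm⟩,
        ⟨SV, hSVo, (Set.inter_eq_self_of_subset_left hSVsub).symm⟩, ?_, ?_, ?_, ?_⟩
      · refine disjoint_left.mpr ?_
        rintro w (hwP | ⟨hwB, hwg⟩) hwSV
        · rcases hwSV with hwQ | ⟨hwB, _⟩
          · exact hPQdisj w hwP hwQ
          · exact hwB ((hPmem w).mp hwP).1
        · rcases hwSV with hwQ | ⟨_, hwg'⟩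
          · exact hwB ((hQmem w).mp hwQ).1
          · rcases hwg with hg | hg
            · exact hPQdisj _ hg hwg'
            · exact absurd hg ((hQmem _).mp hwg').2.2
      · apply Subset.antisymm
        · intro w hw
          rcases hw with h | h
          · exact hSUsub h
          · exact hSVsub h
        · intro w hw
          have hwe : w ≠ (e : X) := by simpa using hw
          by_cases hwB : w ∈ Bset a
          · rcases hPQ w hwB hwe with h | h
            · exact Or.inl (Or.inl h)
            · exact Or.inr (Or.inl h)
          · have hgB : groot a w ∈ Bset a := root_mem_B ha hwB
            by_cases hge : groot a w = (e : X)
            · exact Or.inl (Or.inr ⟨hwB, Or.inr hge⟩)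
            · rcases hPQ _ hgB hge with h | h
              · exact Or.inl (Or.inr ⟨hwB, Or.inl h⟩)
              · exact Or.inr (Or.inr ⟨hwB, h⟩)
      · obtain ⟨u, hu⟩ := hUne
        exact ⟨(u : X), Or.inl ⟨u, hu, rfl⟩⟩
      · obtain ⟨v, hv⟩ := hVne
        exact ⟨(v : X), Or.inl ⟨v, hv, rfl⟩⟩
    have hcutX : CutPoint (e : X) := ⟨SU, SV, hsep⟩
    -- but both P and Q lie in the component of a in the complement of e
    obtain ⟨u, hu⟩ := hUne
    obtain ⟨v, hv⟩ := hVne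
    have hpP : (u : X) ∈ P := ⟨u, hu, rfl⟩
    have hqQ : (v : X) ∈ Q := ⟨v, hv, rfl⟩
    have hK : ∀ w : X, w ∈ Bset a → w ≠ (e : X) → w ∈ Kc a (e : X) := by
      intro w hwB hwe
      have := hwB (e : X) hcutX
      by_contra hK
      exact this ⟨hK, by simpa using hwe⟩
    have hpK : (u : X) ∈ Kc a (e : X) :=
      hK _ ((hPmem _).mp hpP).1 ((hPmem _).mp hpP).2.2
    have hqK : (v : X) ∈ Kc a (e : X) :=
      hK _ ((hQmem _).mp hqQ).1 ((hQmem _).mp hqQ).2.2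
    have hKsub : Kc a (e : X) ⊆ SU ∪ SV := by
      rw [hsep.2.2.2.1]
      exact K_sub
    rcases (K_preconn (a := a) (c := (e : X))).subset_or_subset hSUo hSVo
      hsep.2.2.1 hKsub with h | h
    · exact disjoint_left.mp hsep.2.2.1 (h hqK) (Or.inl hqQ)
    · exact disjoint_left.mp hsep.2.2.1 (Or.inl hpP) (h hpK)
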